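/- The function F(x) = 1 - x^4 - 4x^2·ψ'(1/(1-x)), defined for x ∈ (0,1), satisfies F(x) = (10/3)(1-x)³ + O((1-x)⁴) as x → 1⁻. -/

import Mathlib

open Real Filter Asymptotics MeasureTheory Set Topology

noncomputable def trigamma (y : ℝ) : ℝ := ∑' m : ℕ, 1 / (m + y)^2

noncomputable def psi2 (y : ℝ) : ℝ := -2 * ∑' m : ℕ, 1 / (m + y)^3

/-- Sum of a telescoping series. -/
lemma tsum_telescope' (f : ℕ → ℝ) (h0 : Tendsto f atTop (𝓝 0))
    (hs : Summable (fun n => f n - f (n+1))) :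
    ∑' n, (f n - f (n+1)) = f 0 := by
  have h1 : Tendsto (fun n => ∑ i ∈ Finset.range n, (f i - f (i+1))) atTop
      (𝓝 (∑' n, (f n - f (n+1)))) := hs.hasSum.tendsto_sum_nat
  have h2 : Tendsto (fun n => ∑ i ∈ Finset.range n, (f i - f (i+1))) atTop (𝓝 (f 0)) := by
    simp only [Finset.sum_range_sub' f]
    simpa using tendsto_const_nhds.sub h0
  exact tendsto_nhds_unique h1 h2

lemma tsum_telescope_shift (G : ℝ → ℝ) (y : ℝ)
    (h0 : Tendsto (fun m : ℕ => G ((m:ℝ)+y)) atTop (𝓝 0))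
    (hs : Summable (fun m : ℕ => G ((m:ℝ)+y) - G ((m:ℝ)+y+1))) :
    ∑' m : ℕ, (G ((m:ℝ)+y) - G ((m:ℝ)+y+1)) = G y := by
  have hcast : ∀ m : ℕ, ((m+1:ℕ):ℝ) + y = (m:ℝ) + y + 1 := fun m => by push_cast; ring
  have hs' : Summable (fun m : ℕ => G ((m:ℝ)+y) - G (((m+1:ℕ):ℝ)+y)) :=
    hs.congr (fun m => by rw [hcast m])
  have h := tsum_telescope' (fun m : ℕ => G ((m:ℝ)+y)) h0 hs'
  calc ∑' m : ℕ, (G ((m:ℝ)+y) - G ((m:ℝ)+y+1))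
      = ∑' m : ℕ, (G ((m:ℝ)+y) - G (((m+1:ℕ):ℝ)+y)) := tsum_congr fun m => by rw [hcast m]
    _ = G (((0:ℕ):ℝ) + y) := h
    _ = G y := by norm_num

lemma summable_aux (y : ℝ) (hy : 1 ≤ y) : Summable (fun m : ℕ => 1 / ((m : ℝ) + y)^2) := by
  have h : Summable (fun m : ℕ => 1 / ((m : ℝ) + 1)^2) := by
    have := Real.summable_one_div_nat_pow.mpr (by norm_num : 1 < 2)
    have h2 := (summable_nat_add_iff 1).mpr this
    refine h2.congr fun m => ?_
    push_cast
    ring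
  refine h.of_nonneg_of_le (fun m => by positivity) (fun m => ?_)
  have hm' : (0:ℝ) ≤ (m:ℝ) := Nat.cast_nonneg m
  apply one_div_le_one_div_of_le (by positivity)
  nlinarith

lemma summable_e (y : ℝ) (hy : 1 ≤ y) :
    Summable (fun m : ℕ => 1 / (6 * ((m : ℝ) + y)^3 * ((m : ℝ) + y + 1)^3)) := by
  refine (summable_aux y hy).of_nonneg_of_le (fun m => ?_) (fun m => ?_) <;>
    have h1 : (1 : ℝ) ≤ (m : ℝ) + y := by have : (0:ℝ) ≤ (m:ℝ) := Nat.cast_nonneg m; linarith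
  · have h2 : (0:ℝ) < (m:ℝ) + y + 1 := by linarith
    positivity
  · have h2 : (1:ℝ) ≤ (m:ℝ) + y + 1 := by linarith
    apply one_div_le_one_div_of_le (by positivity)
    have ha3 : ((m:ℝ)+y)^2 ≤ ((m:ℝ)+y)^3 := by nlinarith
    have hb3 : (1:ℝ) ≤ ((m:ℝ)+y+1)^3 := by nlinarith
    nlinarith [pow_pos (show (0:ℝ) < (m:ℝ)+y by linarith) 3]

lemma trigamma_expand (y : ℝ) (hy : 1 ≤ y) :
    |trigamma y - (1/y + 1/(2*y^2) + 1/(6*y^3))| ≤ 1/y^4 := by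
  have hy0 : (0:ℝ) < y := by linarith
  set g : ℝ → ℝ := fun z => 1/z + 1/(2*z^2) + 1/(6*z^3) with hg
  set e : ℕ → ℝ := fun m => 1 / (6 * ((m : ℝ) + y)^3 * ((m : ℝ) + y + 1)^3) with he
  have hpos : ∀ m : ℕ, (0:ℝ) < (m : ℝ) + y := fun m => by
    have : (0:ℝ) ≤ (m:ℝ) := Nat.cast_nonneg m; linarith
  have hterm : ∀ m : ℕ, 1 / ((m : ℝ) + y)^2 = (g ((m:ℝ) + y) - g ((m:ℝ) + y + 1)) - e m := by
    intro m
    have h1 := hpos m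
    have h2 : (0:ℝ) < (m:ℝ) + y + 1 := by linarith
    simp only [hg, he]
    field_simp
    ring
  have hSe := summable_e y hy
  have hS1 := summable_aux y hy
  have hz : Tendsto (fun m : ℕ => (m : ℝ) + y) atTop atTop :=
    tendsto_atTop_add_const_right _ y tendsto_natCast_atTop_atTop
  have hk : ∀ k : ℕ, k ≠ 0 → Tendsto (fun m : ℕ => (((m:ℝ)+y)^k)⁻¹) atTop (𝓝 0) :=
    fun k hk0 => ((tendsto_pow_atTop hk0).comp hz).inv_tendsto_atTop
  have hf0 : Tendsto (fun m : ℕ => g ((m:ℝ) + y)) atTop (𝓝 0) := by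
    have h := (hk 1 one_ne_zero).add
      (((hk 2 two_ne_zero).const_mul (1/2:ℝ)).add ((hk 3 three_ne_zero).const_mul (1/6:ℝ)))
    simp only [mul_zero, add_zero] at h
    refine h.congr fun m => ?_
    have h1 : ((m:ℝ) + y) ≠ 0 := ne_of_gt (hpos m)
    simp only [hg]
    field_simp
    ring
  have hSd : Summable (fun m : ℕ => g ((m:ℝ)+y) - g ((m:ℝ)+y+1)) := by
    refine (hS1.add hSe).congr fun m => ?_
    rw [hterm m]; ring
  have htel : ∑' m : ℕ, (g ((m:ℝ)+y) - g ((m:ℝ)+y+1)) = g y :=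
    tsum_telescope_shift g y hf0 hSd
  have key : trigamma y = g y - ∑' m, e m := by
    rw [trigamma]
    calc ∑' m : ℕ, 1/((m:ℝ)+y)^2
        = ∑' m : ℕ, ((g ((m:ℝ)+y) - g ((m:ℝ)+y+1)) - e m) := tsum_congr hterm
      _ = (∑' m : ℕ, (g ((m:ℝ)+y) - g ((m:ℝ)+y+1))) - ∑' m, e m := Summable.tsum_sub hSd hSe
      _ = g y - ∑' m, e m := by rw [htel]
  -- bound the tail sum
  have hb : ∀ m : ℕ, e m ≤ (1/(6*y^4)) * (1/((m:ℝ)+y) - 1/((m:ℝ)+y+1)) := by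
    intro m
    have h1 := hpos m
    have h2 : (0:ℝ) < (m:ℝ) + y + 1 := by linarith
    have hya : y ≤ (m:ℝ) + y := by have : (0:ℝ) ≤ (m:ℝ) := Nat.cast_nonneg m; linarith
    have hstep : 1/((m:ℝ)+y) - 1/((m:ℝ)+y+1) = 1/(((m:ℝ)+y)*((m:ℝ)+y+1)) := by
      field_simp
      ring
    rw [hstep, he]
    rw [div_mul_div_comm, one_mul]
    rw [div_le_div_iff₀ (by positivity) (by positivity)]
    have h3 : y^2 ≤ ((m:ℝ)+y)^2 := by nlinarith
    have h4 : y^2 ≤ ((m:ℝ)+y+1)^2 := by nlinarith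
    have key2 : y^4 * (((m:ℝ)+y)*((m:ℝ)+y+1)) ≤ ((m:ℝ)+y)^3 * ((m:ℝ)+y+1)^3 := by
      calc y^4 * (((m:ℝ)+y)*((m:ℝ)+y+1)) = (y^2 * ((m:ℝ)+y)) * (y^2 * ((m:ℝ)+y+1)) := by ring
        _ ≤ (((m:ℝ)+y)^2 * ((m:ℝ)+y)) * (((m:ℝ)+y+1)^2 * ((m:ℝ)+y+1)) := by
            refine mul_le_mul (by nlinarith) (by nlinarith) (by positivity) (by positivity)
        _ = ((m:ℝ)+y)^3 * ((m:ℝ)+y+1)^3 := by ring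
    nlinarith
  have hinv0 : Tendsto (fun m : ℕ => 1/((m:ℝ)+y)) atTop (𝓝 0) := by
    refine (hk 1 one_ne_zero).congr fun m => by rw [pow_one, one_div]
  have hStel : Summable (fun m : ℕ => 1/((m:ℝ)+y) - 1/((m:ℝ)+y+1)) := by
    refine hS1.of_nonneg_of_le (fun m => ?_) (fun m => ?_)
    · have h1 := hpos m
      have h2 : (0:ℝ) < (m:ℝ) + y + 1 := by linarith
      have : 1/((m:ℝ)+y+1) ≤ 1/((m:ℝ)+y) := by
        apply one_div_le_one_div_of_le h1; linarith
      linarith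
    · have h1 := hpos m
      have h2 : (0:ℝ) < (m:ℝ) + y + 1 := by linarith
      have hstep : 1/((m:ℝ)+y) - 1/((m:ℝ)+y+1) = 1/(((m:ℝ)+y)*((m:ℝ)+y+1)) := by
        field_simp
        ring
      rw [hstep]
      apply one_div_le_one_div_of_le (by positivity)
      nlinarith
  have htel2 : ∑' m : ℕ, (1/((m:ℝ)+y) - 1/((m:ℝ)+y+1)) = 1/y := by
    have := tsum_telescope_shift (fun z => 1/z) y hinv0 hStel
    simpa using this
  have hbound : ∑' m, e m ≤ 1/y^4 := by
    have h1 : ∑' m, e m ≤ ∑' m : ℕ, (1/(6*y^4)) * (1/((m:ℝ)+y) - 1/((m:ℝ)+y+1)) :=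
      Summable.tsum_le_tsum hb hSe (hStel.mul_left _)
    rw [tsum_mul_left, htel2] at h1
    have h2 : (1/(6*y^4)) * (1/y) ≤ 1/y^4 := by
      rw [div_mul_div_comm, one_mul]
      apply one_div_le_one_div_of_le (by positivity)
      nlinarith [pow_pos hy0 4]
    linarith
  have hnn : 0 ≤ ∑' m, e m := tsum_nonneg fun m => by
    have h1 := hpos m
    have h2 : (0:ℝ) < (m:ℝ) + y + 1 := by linarith
    positivity
  rw [key]
  rw [show g y - ∑' m, e m - (1/y + 1/(2*y^2) + 1/(6*y^3)) = -(∑' m, e m) by rw [hg]; ring]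
  rw [abs_neg, abs_of_nonneg hnn]
  exact hbound

theorem stmt1 :
    (fun x : ℝ => (1 - x^4 - 4*x^2 * trigamma (1/(1-x))) - (10/3)*(1-x)^3)
      =O[𝓝[Set.Ioo (0:ℝ) 1] 1] fun x => (1-x)^4 := by
  rw [isBigO_iff]
  refine ⟨6, ?_⟩
  have h1 : ∀ᶠ x in 𝓝[Set.Ioo (0:ℝ) 1] 1, x ∈ Set.Ioo (0:ℝ) 1 := eventually_mem_nhdsWithin
  have h2 : ∀ᶠ x in 𝓝[Set.Ioo (0:ℝ) 1] 1, (1:ℝ)/2 < x :=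
    eventually_nhdsWithin_of_eventually_nhds (eventually_gt_nhds (by norm_num))
  filter_upwards [h1, h2] with x hx hx2
  obtain ⟨hx0, hx1⟩ := hx
  set t : ℝ := 1 - x with ht
  have ht0 : 0 < t := by rw [ht]; linarith
  have ht2 : t ≤ 1/2 := by rw [ht]; linarith
  have hy : (1:ℝ) ≤ 1/t := by
    rw [le_div_iff₀ ht0]; linarith
  have hkey := trigamma_expand (1/t) hy
  have htne : t ≠ 0 := ne_of_gt ht0
  have hsimp : 1/((1:ℝ)/t) = t := one_div_one_div t
  have hsimp2 : 1/(2*((1:ℝ)/t)^2) = t^2/2 := by field_simp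
  have hsimp3 : 1/(6*((1:ℝ)/t)^3) = t^3/6 := by field_simp
  have hsimp4 : 1/((1:ℝ)/t)^4 = t^4 := by field_simp
  rw [hsimp, hsimp2, hsimp3, hsimp4] at hkey
  set h : ℝ := trigamma (1/t) - (t + t^2/2 + t^3/6) with hh
  have hexpand : (1 - x^4 - 4*x^2 * trigamma (1/(1-x))) - (10/3)*(1-x)^3
      = -(5/3)*t^4 - (2/3)*t^5 - 4*x^2*h := by
    have h5 : trigamma (1/(1-x)) = (t + t^2/2 + t^3/6) + h := by rw [hh, ht]; ring_nf
    rw [h5, show x = 1 - t by rw [ht]; ring]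
    ring
  rw [hexpand]
  have hx2le : x^2 ≤ 1 := by nlinarith
  have habs4 : |4*x^2*h| ≤ 4*t^4 := by
    rw [abs_mul]
    have ha : |4*x^2| ≤ 4 := by rw [abs_of_nonneg (by positivity)]; linarith
    have ht4 : (0:ℝ) ≤ t^4 := by positivity
    calc |4*x^2| * |h| ≤ 4 * |h| := mul_le_mul_of_nonneg_right ha (abs_nonneg h)
      _ ≤ 4 * t^4 := by linarith [hkey]
  have habs : |(-(5/3)*t^4 - (2/3)*t^5 - 4*x^2*h)| ≤ (5/3)*t^4 + (2/3)*t^5 + 4*t^4 := by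
    calc |(-(5/3)*t^4 - (2/3)*t^5 - 4*x^2*h)|
        ≤ |(-(5/3)*t^4 - (2/3)*t^5)| + |4*x^2*h| := by
          rw [sub_eq_add_neg]
          refine (abs_add_le _ _).trans ?_
          rw [abs_neg]
      _ ≤ (5/3)*t^4 + (2/3)*t^5 + 4*t^4 := by
          have heq : |(-(5/3)*t^4 - (2/3)*t^5)| = (5/3)*t^4 + (2/3)*t^5 := by
            rw [show (-(5/3)*t^4 - (2/3)*t^5 : ℝ) = -((5/3)*t^4 + (2/3)*t^5) by ring, abs_neg,
              abs_of_nonneg (by positivity)]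
          rw [heq]
          exact add_le_add_right habs4 _
  have ht5 : t^5 ≤ t^4/2 := by
    have h6 := mul_le_mul_of_nonneg_right ht2 (pow_pos ht0 4).le
    nlinarith [h6]
  calc ‖(-(5/3)*t^4 - (2/3)*t^5 - 4*x^2*h)‖ = |(-(5/3)*t^4 - (2/3)*t^5 - 4*x^2*h)| := rfl
    _ ≤ (5/3)*t^4 + (2/3)*t^5 + 4*t^4 := habs
    _ ≤ 6 * t^4 := by nlinarith [ht5]
    _ = 6 * ‖(1-x)^4‖ := by
        rw [Real.norm_eq_abs, abs_of_nonneg (by positivity : (0:ℝ) ≤ (1-x)^4), ← ht]
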